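/- The measure ν_α on finitely-supported subsets of the Rado graph vertices is equivariant and finitely additive: ν_α(σ • S) = ν_α(S) for every automorphism σ, ν_α(V) = 1, and ν_α(S ⊎ T) = ν_α(S) + ν_α(T) for disjoint finitely-supported S, T. -/
import Mathlib


/-- A graph has the extension property if for all disjoint finite vertex sets `A`, `B`
there is a vertex outside `A ∪ B` adjacent to everything in `A` and nothing in `B`. -/
def HasExtensionProperty {V : Type*} (G : SimpleGraph V) : Prop :=
  ∀ A B : Finset V, Disjoint A B →
    ∃ v, v ∉ A ∧ v ∉ B ∧ (∀ a ∈ A, G.Adj v a) ∧ ∀ b ∈ B, ¬ G.Adj v b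

/-- The finite list of vertices `a 0, …, a (n-1)` supports the set `S`:
every automorphism of `G` fixing each `a i` maps `S` to itself. -/
def SupportsSet {V : Type} (G : SimpleGraph V) {n : ℕ} (a : Fin n → V) (S : Set V) : Prop :=
  ∀ σ : G ≃g G, (∀ i, σ (a i) = a i) → σ '' S = S

/-- The family `v` realizes all `2^n` adjacency patterns to `a 0, …, a (n-1)`:
`v c` lies outside the support and is adjacent to `a i` exactly when `c i = true`. -/
def RealizesPatterns {V : Type} (G : SimpleGraph V) {n : ℕ}
    (a : Fin n → V) (v : (Fin n → Bool) → V) : Prop :=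
  ∀ c : Fin n → Bool, v c ∉ Set.range a ∧ ∀ i, (G.Adj (v c) (a i) ↔ c i = true)

open scoped Classical in
/-- `ν_α(S) = Σ_j [v_j ∈ S] ∏_i (α[E(v_j,a_i)] + (1-α)[¬E(v_j,a_i)])`, the candidate
value of the measure of `S`, computed from pattern representatives `v`. -/
noncomputable def patVal {V : Type} (α : ℝ) {n : ℕ} (S : Set V)
    (v : (Fin n → Bool) → V) : ℝ :=
  ∑ c : Fin n → Bool,
    (if v c ∈ S then (1:ℝ) else 0) * ∏ i, (if c i then α else 1 - α)

/-- A set is finitely supported if some finite list of vertices supports it. -/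
def FinitelySupportedSet {V : Type} (G : SimpleGraph V) (S : Set V) : Prop :=
  ∃ (n : ℕ) (a : Fin n → V), Function.Injective a ∧ SupportsSet G a S


section Aux
variable {V : Type} (G : SimpleGraph V)

open scoped Classical

lemma exists_realizer (hG : HasExtensionProperty G)
    {n : ℕ} (a : Fin n → V) (ha : Function.Injective a) :
    ∃ v, RealizesPatterns G a v := by
  have h : ∀ c : Fin n → Bool,
      ∃ w : V, w ∉ Set.range a ∧ ∀ i, (G.Adj w (a i) ↔ c i = true) := by
    intro c
    set A : Finset V := (Finset.univ.filter (fun i => c i = true)).image a with hA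
    set B : Finset V := (Finset.univ.filter (fun i => c i = false)).image a with hB
    have hdis : Disjoint A B := by
      rw [Finset.disjoint_left]
      rintro x hxA hxB
      simp only [hA, hB, Finset.mem_image, Finset.mem_filter, Finset.mem_univ,
        true_and] at hxA hxB
      obtain ⟨i, hi, rfl⟩ := hxA
      obtain ⟨j, hj, hji⟩ := hxB
      have := ha hji
      subst this
      simp [hi] at hj
    obtain ⟨w, hwA, hwB, hadj, hnadj⟩ := hG A B hdis
    refine ⟨w, ?_, ?_⟩
    · rintro ⟨i, rfl⟩
      cases hc : c i
      · exact hwB (by simp [hB, Finset.mem_image]; exact ⟨i, hc, rfl⟩)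
      · exact hwA (by simp [hA, Finset.mem_image]; exact ⟨i, hc, rfl⟩)
    · intro i
      cases hc : c i
      · simp only [Bool.false_eq_true, iff_false]
        exact hnadj (a i) (by simp [hB, Finset.mem_image]; exact ⟨i, hc, rfl⟩)
      · simp only [iff_true]
        exact hadj (a i) (by simp [hA, Finset.mem_image]; exact ⟨i, hc, rfl⟩)
  choose v hv using h
  exact ⟨v, hv⟩

end Aux

/-- Equivariance, normalization and finite additivity of `ν_α` on finitely-supported
subsets of the Rado graph: here `ν` is any function satisfying the defining formula
of `ν_α` (via pattern representatives) on finitely-supported sets. -/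
theorem stmt13 {V : Type} [Countable V] [Infinite V]
    (G : SimpleGraph V) (hG : HasExtensionProperty G)
    (α : ℝ) (hα : α ∈ Set.Icc (0:ℝ) 1)
    (ν : Set V → ℝ)
    (hν : ∀ (S : Set V) {n : ℕ} (a : Fin n → V) (v : (Fin n → Bool) → V),
      Function.Injective a → SupportsSet G a S → RealizesPatterns G a v →
        ν S = patVal α S v) :
    (∀ (σ : G ≃g G) (S : Set V), FinitelySupportedSet G S → ν (σ '' S) = ν S) ∧
      ν Set.univ = 1 ∧
      (∀ S T : Set V, FinitelySupportedSet G S → FinitelySupportedSet G T →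
        Disjoint S T → ν (S ∪ T) = ν S + ν T) := by
  classical
  have hmain : ∀ (σ : G ≃g G) (S : Set V), FinitelySupportedSet G S → ν (σ '' S) = ν S := by
    rintro σ S ⟨n, a, ha, hsupp⟩
    obtain ⟨v, hv⟩ := exists_realizer G hG a ha
    have ha' : Function.Injective (fun i => σ (a i)) := fun i j h => ha (σ.injective h)
    have hsupp' : SupportsSet G (fun i => σ (a i)) (σ '' S) := by
      intro τ hτ
      set ρ : G ≃g G := (σ.trans τ).trans σ.symm with hρ
      have hρfix : ∀ i, ρ (a i) = a i := by
        intro i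
        have h1 : τ (σ (a i)) = σ (a i) := hτ i
        show σ.symm (τ (σ (a i))) = a i
        rw [h1]
        exact σ.symm_apply_apply (a i)
      have hρS := hsupp ρ hρfix
      have hcomp : ∀ x, τ (σ x) = σ (ρ x) := by
        intro x
        show τ (σ x) = σ (σ.symm (τ (σ x)))
        rw [σ.apply_symm_apply]
      calc τ '' (σ '' S) = (fun x => τ (σ x)) '' S := by rw [Set.image_image]
        _ = (fun x => σ (ρ x)) '' S := by simp only [hcomp]
        _ = σ '' (ρ '' S) := by rw [Set.image_image]
        _ = σ '' S := by rw [hρS]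
    have hv' : RealizesPatterns G (fun i => σ (a i)) (fun c => σ (v c)) := by
      intro c
      obtain ⟨hr, hadj⟩ := hv c
      constructor
      · rintro ⟨i, hi⟩
        exact hr ⟨i, σ.injective hi⟩
      · intro i
        rw [σ.map_adj_iff]
        exact hadj i
    rw [hν (σ '' S) (fun i => σ (a i)) (fun c => σ (v c)) ha' hsupp' hv',
      hν S a v ha hsupp hv]
    unfold patVal
    refine Finset.sum_congr rfl (fun c _ => ?_)
    congr 1
    have : σ (v c) ∈ σ '' S ↔ v c ∈ S := σ.injective.mem_set_image
    by_cases h : v c ∈ S <;> simp [h, this]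
  refine ⟨hmain, ?_, ?_⟩
  · have ha : Function.Injective (Fin.elim0 : Fin 0 → V) := fun i => i.elim0
    have hsupp : SupportsSet G (Fin.elim0 : Fin 0 → V) Set.univ := by
      intro σ _
      rw [Set.image_univ, σ.surjective.range_eq]
    obtain ⟨v, hv⟩ := exists_realizer G hG (Fin.elim0 : Fin 0 → V) ha
    rw [hν Set.univ Fin.elim0 v ha hsupp hv]
    unfold patVal
    simp
  · rintro S T ⟨n, a, ha, hSa⟩ ⟨m, b, hb, hTb⟩ hdis
    set F : Finset V := Finset.image a Finset.univ ∪ Finset.image b Finset.univ with hF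
    set c : Fin F.card → V := fun i => (F.equivFin.symm i : V) with hcdef
    have hc : Function.Injective c := fun i j h =>
      F.equivFin.symm.injective (Subtype.ext h)
    have hmem : ∀ x ∈ F, x ∈ Set.range c := fun x hx =>
      ⟨F.equivFin ⟨x, hx⟩, by simp [hcdef]⟩
    have hfix : ∀ (σ : G ≃g G), (∀ i, σ (c i) = c i) → ∀ x ∈ F, σ x = x := by
      intro σ hσ x hx
      obtain ⟨i, rfl⟩ := hmem x hx
      exact hσ i
    have hSc : SupportsSet G c S := by
      intro σ hσ
      exact hSa σ (fun i => hfix σ hσ (a i)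
        (by simp [hF, Finset.mem_union, Finset.mem_image]))
    have hTc : SupportsSet G c T := by
      intro σ hσ
      exact hTb σ (fun i => hfix σ hσ (b i)
        (by simp [hF, Finset.mem_union, Finset.mem_image]))
    have hUc : SupportsSet G c (S ∪ T) := by
      intro σ hσ
      rw [Set.image_union, hSc σ hσ, hTc σ hσ]
    obtain ⟨v, hv⟩ := exists_realizer G hG c hc
    rw [hν (S ∪ T) c v hc hUc hv, hν S c v hc hSc hv, hν T c v hc hTc hv]
    unfold patVal
    rw [← Finset.sum_add_distrib]
    refine Finset.sum_congr rfl (fun cc _ => ?_)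
    by_cases hS : v cc ∈ S
    · have hT : v cc ∉ T := fun hT => Set.disjoint_left.mp hdis hS hT
      simp [Set.mem_union, hS, hT]
    · by_cases hT : v cc ∈ T <;> simp [Set.mem_union, hS, hT]
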